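/- Let F be a hermitian matrix on ℂ² ⊗ ℂⁿ and ψ a unit vector in ℂ² ⊗ ℂⁿ such that F − 2|ψ⟩⟨ψ| is positive semidefinite. Then the largest eigenvalue of F^Γ is at least 1; equivalently, there exists a unit vector v with ⟨v, F^Γ v⟩ ≥ 1. -/

import Mathlib

open Matrix
open scoped ComplexOrder

/-- The positive semidefinite square root of a positive semidefinite matrix, as defined in
Mathlib (December 2024) under the name `Matrix.PosSemidef.sqrt`. -/
noncomputable def posSemidefSqrt {ι : Type*} [Fintype ι] [DecidableEq ι]
    {A : Matrix ι ι ℂ} (hA : A.PosSemidef) : Matrix ι ι ℂ :=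
  hA.1.eigenvectorUnitary.1 * diagonal ((↑) ∘ (√·) ∘ hA.1.eigenvalues) *
  (star hA.1.eigenvectorUnitary : Matrix ι ι ℂ)

noncomputable def traceNorm {ι : Type*} [Fintype ι] [DecidableEq ι]
    (A : Matrix ι ι ℂ) : ℝ :=
  ((posSemidefSqrt (Matrix.posSemidef_conjTranspose_mul_self A)).trace).re

noncomputable def mfun {ι : Type*} [Fintype ι] [DecidableEq ι] (g : ℝ → ℝ)
    (A : Matrix ι ι ℂ) : Matrix ι ι ℂ :=
  if hA : A.IsHermitian then
    (hA.eigenvectorUnitary : Matrix ι ι ℂ) *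
      Matrix.diagonal (fun i => (g (hA.eigenvalues i) : ℂ)) *
      (star hA.eigenvectorUnitary : Matrix ι ι ℂ)
  else 0

noncomputable def divDiff {ι : Type*} (g : ℝ → ℝ) (a : ι → ℝ) : Matrix ι ι ℝ :=
  Matrix.of fun i j =>
    if a i = a j then deriv g (a i) else (g (a i) - g (a j)) / (a i - a j)

noncomputable def Dop {ι : Type*} [Fintype ι] [DecidableEq ι] (g : ℝ → ℝ)
    {A : Matrix ι ι ℂ} (hA : A.IsHermitian) (B : Matrix ι ι ℂ) : Matrix ι ι ℂ :=
  (hA.eigenvectorUnitary : Matrix ι ι ℂ) *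
    (((divDiff g hA.eigenvalues).map Complex.ofReal) ⊙
      ((star hA.eigenvectorUnitary : Matrix ι ι ℂ) * B *
        (hA.eigenvectorUnitary : Matrix ι ι ℂ))) *
    (star hA.eigenvectorUnitary : Matrix ι ι ℂ)

noncomputable def relEnt {ι : Type*} [Fintype ι] [DecidableEq ι]
    (ρ σ : Matrix ι ι ℂ) : ℝ :=
  ((ρ * (mfun Real.log ρ - mfun Real.log σ)).trace).re

def ptrans {m n : Type*} (A : Matrix (m × n) (m × n) ℂ) : Matrix (m × n) (m × n) ℂ :=
  Matrix.of fun p q => A (p.1, q.2) (q.1, p.2)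

set_option maxHeartbeats 1000000

lemma trace_eq_sum_eigs {m : Type*} [Fintype m] [DecidableEq m]
    {A : Matrix m m ℂ} (hA : A.IsHermitian) :
    A.trace = ∑ i, (hA.eigenvalues i : ℂ) := by
  conv_lhs => rw [hA.spectral_theorem, Unitary.conjStarAlgAut_apply]
  rw [Matrix.trace_mul_cycle, (Matrix.mem_unitaryGroup_iff').mp (hA.eigenvectorUnitary).2,
    one_mul, Matrix.trace_diagonal]
  rfl

theorem ptrans_eigenvalue_ge_one_of_dominates_rankOne
    {n : ℕ} (F : Matrix (Fin 2 × Fin n) (Fin 2 × Fin n) ℂ) (hF : F.IsHermitian)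
    (ψ : Fin 2 × Fin n → ℂ) (hψ : ∑ p, Complex.normSq (ψ p) = 1)
    (hpos : (F - (2 : ℂ) • Matrix.vecMulVec ψ (star ψ)).PosSemidef) :
    ∃ v : Fin 2 × Fin n → ℂ, (∑ p, Complex.normSq (v p) = 1) ∧
      (1 : ℝ) ≤ (dotProduct (star v) (ptrans F *ᵥ v)).re := by
  classical
  set M : Matrix (Fin 2) (Fin n) ℂ := Matrix.of (fun i j => ψ (i, j)) with hMdef
  have hG : (M * Mᴴ).IsHermitian := Matrix.isHermitian_mul_conjTranspose_self M
  -- trace of M Mᴴ is 1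
  have htr : (M * Mᴴ).trace = 1 := by
    have : (M * Mᴴ).trace = ∑ p : Fin 2 × Fin n, (Complex.normSq (ψ p) : ℂ) := by
      rw [Matrix.trace, Fintype.sum_prod_type]
      simp [Matrix.diag, Matrix.mul_apply, Matrix.conjTranspose_apply, hMdef,
        Complex.mul_conj]
    rw [this, ← Complex.ofReal_sum, hψ, Complex.ofReal_one]
  have hsum : hG.eigenvalues 0 + hG.eigenvalues 1 = 1 := by
    have h := trace_eq_sum_eigs hG
    rw [htr, Fin.sum_univ_two] at h
    exact_mod_cast h.symm
  obtain ⟨i, hi⟩ : ∃ i, (1:ℝ)/2 ≤ hG.eigenvalues i := by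
    by_contra hc
    push_neg at hc
    have := add_lt_add (hc 0) (hc 1)
    rw [hsum] at this; norm_num at this
  set μ : ℝ := hG.eigenvalues i with hμdef
  have hμhalf : (1:ℝ)/2 ≤ μ := hi
  have hμpos : 0 < μ := by linarith
  obtain ⟨a, ha, hanorm⟩ : ∃ a : Fin 2 → ℂ,
      (M * Mᴴ) *ᵥ a = (μ : ℂ) • a ∧ ∑ k, Complex.normSq (a k) = 1 := by
    refine ⟨⇑(hG.eigenvectorBasis i), ?_, ?_⟩
    · funext k
      have h := congrFun (hG.mulVec_eigenvectorBasis i) k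
      rw [h]
      simp [Complex.real_smul, hμdef]
    · have h1 := hG.eigenvectorBasis.orthonormal.1 i
      rw [EuclideanSpace.norm_eq] at h1
      have h2 : ∑ k, ‖hG.eigenvectorBasis i k‖ ^ 2 = 1 := Real.sqrt_eq_one.mp h1
      calc ∑ k, Complex.normSq (hG.eigenvectorBasis i k)
          = ∑ k, ‖hG.eigenvectorBasis i k‖ ^ 2 :=
            Finset.sum_congr rfl (fun k _ => by
              rw [Complex.normSq_eq_norm_sq])
        _ = 1 := h2
  set b : Fin n → ℂ := Mᴴ *ᵥ a with hbdef
  have hbconj : ∀ j, (starRingEnd ℂ) (b j) = ∑ k, M k j * (starRingEnd ℂ) (a k) := by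
    intro j
    simp [hbdef, Matrix.mulVec, dotProduct, Matrix.conjTranspose_apply, map_sum,
      mul_comm]
  have hbnormC : ∑ j, (starRingEnd ℂ) (b j) * b j = (μ : ℂ) := by
    have h1 : star b ⬝ᵥ b = star a ⬝ᵥ ((M * Mᴴ) *ᵥ a) := by
      rw [hbdef, Matrix.star_mulVec, Matrix.conjTranspose_conjTranspose,
        ← Matrix.mulVec_mulVec, Matrix.dotProduct_mulVec, Matrix.dotProduct_mulVec,
        Matrix.vecMul_vecMul]
      conv_rhs => rw [Matrix.dotProduct_mulVec, Matrix.vecMul_vecMul]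
    have h2 : star a ⬝ᵥ ((M * Mᴴ) *ᵥ a) = (μ : ℂ) := by
      rw [ha, dotProduct_smul]
      have : star a ⬝ᵥ a = 1 := by
        have : star a ⬝ᵥ a = ∑ k, (starRingEnd ℂ) (a k) * a k := by
          simp [dotProduct, Pi.star_apply]
        rw [this]
        have : ∑ k, (starRingEnd ℂ) (a k) * a k
            = ((∑ k, Complex.normSq (a k) : ℝ) : ℂ) := by
          push_cast
          exact Finset.sum_congr rfl fun k _ => by
            rw [Complex.normSq_eq_conj_mul_self]
        rw [this, hanorm, Complex.ofReal_one]
      rw [this, smul_eq_mul, mul_one]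
    rw [← h1] at h2
    simpa [dotProduct, Pi.star_apply] using h2
  have hbnorm : ∑ j, Complex.normSq (b j) = μ := by
    have : ∑ j, (starRingEnd ℂ) (b j) * b j
        = ((∑ j, Complex.normSq (b j) : ℝ) : ℂ) := by
      push_cast
      exact Finset.sum_congr rfl fun j _ => by rw [Complex.normSq_eq_conj_mul_self]
    rw [this] at hbnormC
    exact_mod_cast hbnormC
  set s : ℝ := Real.sqrt μ with hsdef
  have hspos : 0 < s := Real.sqrt_pos.mpr hμpos
  have hs2 : s ^ 2 = μ := Real.sq_sqrt hμpos.le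
  -- the vectors
  set v : Fin 2 × Fin n → ℂ := fun p => a p.1 * b p.2 / (s : ℂ) with hvdef
  set w : Fin 2 × Fin n → ℂ := fun p => a p.1 * (starRingEnd ℂ) (b p.2) / (s : ℂ) with hwdef
  refine ⟨v, ?_, ?_⟩
  · -- norm of v
    rw [Fintype.sum_prod_type]
    have : ∀ k j, Complex.normSq (v (k, j)) = Complex.normSq (a k) * Complex.normSq (b j) / μ := by
      intro k j
      simp [hvdef, Complex.normSq_div, Complex.normSq_mul, Complex.normSq_ofReal, ← hs2]
      ring
    simp only [this]
    simp only [div_eq_mul_inv, mul_assoc, ← Finset.mul_sum]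
    rw [← Finset.sum_mul, ← Finset.sum_mul, hanorm, hbnorm, one_mul,
      mul_inv_cancel₀ hμpos.ne']
  · -- key identity: partial transpose quadratic form equals quadratic form at w
    have key : star v ⬝ᵥ (ptrans F *ᵥ v) = star w ⬝ᵥ (F *ᵥ w) := by
      simp only [dotProduct, Matrix.mulVec, Pi.star_apply, ptrans, Matrix.of_apply,
        Finset.mul_sum, Fintype.sum_prod_type]
      refine Finset.sum_congr rfl fun i _ => ?_
      have swap3 : ∀ g : Fin n → Fin 2 → Fin n → ℂ,
          (∑ j, ∑ k, ∑ l, g j k l) = ∑ j, ∑ k, ∑ l, g l k j := by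
        intro g
        calc (∑ j, ∑ k, ∑ l, g j k l) = ∑ k, ∑ j, ∑ l, g j k l := Finset.sum_comm
          _ = ∑ k, ∑ l, ∑ j, g j k l := Finset.sum_congr rfl fun k _ => Finset.sum_comm
          _ = ∑ l, ∑ k, ∑ j, g j k l := Finset.sum_comm
      rw [swap3 (fun j k l => star (w (i, j)) * (F (i, j) (k, l) * w (k, l)))]
      refine Finset.sum_congr rfl fun j _ => Finset.sum_congr rfl fun k _ =>
        Finset.sum_congr rfl fun l _ => ?_
      simp only [hvdef, hwdef, Complex.star_def, map_div₀, _root_.map_mul,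
        Complex.conj_ofReal, Complex.conj_conj]
      ring
    have hc : star w ⬝ᵥ ψ = (s : ℂ) := by
      have expand : star w ⬝ᵥ ψ
          = ∑ j, (∑ i', M i' j * (starRingEnd ℂ) (a i')) * b j / (s:ℂ) := by
        simp only [dotProduct, Pi.star_apply, hwdef, Complex.star_def, map_div₀,
          _root_.map_mul, Complex.conj_ofReal, Complex.conj_conj]
        rw [Fintype.sum_prod_type, Finset.sum_comm]
        refine Finset.sum_congr rfl fun j _ => ?_
        rw [Finset.sum_mul, Finset.sum_div]
        refine Finset.sum_congr rfl fun i' _ => ?_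
        simp only [hMdef, Matrix.of_apply]
        ring
      rw [expand]
      rw [Finset.sum_congr rfl fun j _ => by rw [← hbconj j]]
      rw [← Finset.sum_div, hbnormC]
      rw [div_eq_iff (by exact_mod_cast hspos.ne' : ((s:ℂ)) ≠ 0)]
      rw [← Complex.ofReal_mul, Real.mul_self_sqrt hμpos.le]
    have hd : star ψ ⬝ᵥ w = (s : ℂ) := by
      have h : star ψ ⬝ᵥ w = (starRingEnd ℂ) (star w ⬝ᵥ ψ) := by
        simp only [dotProduct, map_sum, Pi.star_apply, Complex.star_def,
          _root_.map_mul, Complex.conj_conj]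
        exact Finset.sum_congr rfl fun p _ => by ring
      rw [h, hc, Complex.conj_ofReal]
    have hQ : star w ⬝ᵥ (Matrix.vecMulVec ψ (star ψ) *ᵥ w) = (μ : ℂ) := by
      have h1 : Matrix.vecMulVec ψ (star ψ) *ᵥ w = (star ψ ⬝ᵥ w) • ψ := by
        funext p
        simp only [Matrix.mulVec, dotProduct, Matrix.vecMulVec_apply, Pi.smul_apply,
          smul_eq_mul]
        rw [Finset.sum_mul]
        exact Finset.sum_congr rfl fun q _ => by simp only [Pi.star_apply]; ring
      rw [h1, dotProduct_smul, hd, hc, smul_eq_mul, ← Complex.ofReal_mul,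
        Real.mul_self_sqrt hμpos.le]
    have hp := hpos.dotProduct_mulVec_nonneg w
    rw [Matrix.sub_mulVec, dotProduct_sub, Matrix.smul_mulVec,
      dotProduct_smul, hQ] at hp
    have hre : 0 ≤ (star w ⬝ᵥ (F *ᵥ w) - (2:ℂ) • (μ:ℂ)).re := by
      exact (Complex.le_def.mp hp).1
    rw [key]
    have : ((2:ℂ) • (μ:ℂ)).re = 2 * μ := by
      simp [smul_eq_mul]
    rw [Complex.sub_re, this] at hre
    linarith
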